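/- Let b ∈ ℝ^s with all b_i ≠ 0, B = diag(b), c ∈ ℝ^s, and A ∈ ℝ^{s×s} with Â = (𝟙 − B⁻¹Aᵀ)B. Suppose A satisfies C(η): ∑_j A_{i,j} c_j^{k−1} = c_i^k/k for 1 ≤ k ≤ η, and B(η): ∑_i b_i c_i^{k−1} = 1/k for 1 ≤ k ≤ η. Then Â satisfies D(η): ∑_i b_i c_i^{k−1} Â_{i,j} = (b_j/k)(1 − c_j^k) for all j and 1 ≤ k ≤ η. -/

import Mathlib

open Matrix

/-- The symplectic conjugate of a method satisfying `C(η)` (together with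
quadrature order `η`) satisfies the simplifying condition `D(η)`. -/
theorem conjugate_C_implies_D (s η : ℕ)
    (b c : Fin s → ℝ) (hb : ∀ i, b i ≠ 0)
    (A Ahat : Matrix (Fin s) (Fin s) ℝ)
    (hAhat : Ahat =
      ((Matrix.of fun _ _ => (1 : ℝ)) - (Matrix.diagonal b)⁻¹ * Aᵀ) * Matrix.diagonal b)
    (hC : ∀ (i : Fin s) (k : ℕ), 1 ≤ k → k ≤ η →
      ∑ j, A i j * (c j) ^ (k - 1) = (c i) ^ k / (k : ℝ))
    (hB : ∀ k : ℕ, 1 ≤ k → k ≤ η → ∑ i, b i * (c i) ^ (k - 1) = 1 / (k : ℝ)) :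
    ∀ (j : Fin s) (k : ℕ), 1 ≤ k → k ≤ η →
      ∑ i, b i * (c i) ^ (k - 1) * Ahat i j = b j / (k : ℝ) * (1 - (c j) ^ k) := by
  intro j k hk1 hkη
  have hinv : (Matrix.diagonal b)⁻¹ = Matrix.diagonal fun i => (b i)⁻¹ := by
    apply Matrix.inv_eq_right_inv
    rw [Matrix.diagonal_mul_diagonal]
    convert Matrix.diagonal_one using 2
    exact funext fun i => mul_inv_cancel₀ (hb i)
  have hentry : ∀ i, Ahat i j = b j - (b i)⁻¹ * A j i * b j := by
    intro i
    simp [hAhat, hinv, Matrix.mul_apply, Matrix.sub_apply, Matrix.diagonal_apply,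
      Matrix.transpose_apply, Finset.mul_sum, sub_mul]
  have key : ∑ i, b i * (c i) ^ (k - 1) * Ahat i j
      = b j * (∑ i, b i * (c i) ^ (k - 1)) - b j * (∑ i, A j i * (c i) ^ (k - 1)) := by
    rw [Finset.mul_sum, Finset.mul_sum, ← Finset.sum_sub_distrib]
    refine Finset.sum_congr rfl fun i _ => ?_
    rw [hentry i]
    field_simp [hb i]
  rw [key, hB k hk1 hkη, hC j k hk1 hkη]
  have hk : (k : ℝ) ≠ 0 := Nat.cast_ne_zero.mpr (by omega)
  field_simp
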